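/- (Leading coefficient ideal characterization.) G is a Gröbner basis of M if and only if for every α ∈ ℕ^n and 1 ≤ u ≤ m, the left ideal ⟨α,M⟩_u := ⟨ lc(f) : f ∈ M, ind(lm(f)) = u, exp(lm(f)) = α ⟩ of R equals the left ideal J_u := ⟨ σ^β(lc(g)) c_{β,g} : g ∈ G, ind(lm(g)) = u, β + exp(lm(g)) = α ⟩. -/

import Mathlib

namespace SPBW

/-- Monomials of the free module `A^m` over a σ-PBW extension in `n` variables:
pairs `(α, i)` representing `x^α e_i`. -/
abbrev Mon (n m : ℕ) := (Fin n → ℕ) × Fin m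

/-- A presentation of the ring `A` as a σ-PBW (skew PBW) extension of `R`
in variables `x_1, …, x_n` (Definition 1 together with Theorem 6). -/
structure Ext (R A : Type*) [Ring R] [Ring A] (n : ℕ) where
  /-- the inclusion `R ⊆ A` -/
  φ : R →+* A
  inj : Function.Injective φ
  /-- the variables `x₁, …, xₙ` -/
  x : Fin n → A
  /-- the standard monomials `x^α = x₁^{α₁} ⋯ xₙ^{αₙ}` -/
  mono : (Fin n → ℕ) → A
  mono_def : ∀ α, mono α = (List.ofFn fun i => x i ^ α i).prod
  /-- coordinates of an element of `A` in the left `R`-basis `Mon(A)` -/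
  coord : A → ((Fin n → ℕ) →₀ R)
  coord_add : ∀ a b, coord (a + b) = coord a + coord b
  repr' : ∀ a : A, a = ((coord a).sum fun α r => φ r * mono α)
  coord_eq : ∀ (a : A) (cf : (Fin n → ℕ) →₀ R),
      a = (cf.sum fun α r => φ r * mono α) → coord a = cf
  /-- the injective endomorphisms `σ^α` of Proposition 2 / Theorem 6(a) -/
  σp : (Fin n → ℕ) → R →+* R
  σp_inj : ∀ α, Function.Injective (σp α)
  /-- the structure constants `c_{α,β}` of Theorem 6(b) -/
  cst : (Fin n → ℕ) → (Fin n → ℕ) → R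
  cst_left_inv : ∀ α β, ∃ c', c' * cst α β = 1
  /-- `x^α r = σ^α(r) x^α + p_{α,r}` with `p_{α,r}` of lower degree -/
  mono_mul_r : ∀ (α : Fin n → ℕ) (r : R), ∃ p : A,
      mono α * φ r = φ (σp α r) * mono α + p ∧
      (p = 0 ∨ ((coord p).support.sup fun β => ∑ i, β i) < ∑ i, α i)
  /-- `x^α x^β = c_{α,β} x^{α+β} + p_{α,β}` with `p_{α,β}` of lower degree -/
  mono_mul : ∀ α β : Fin n → ℕ, ∃ p : A,
      mono α * mono β = φ (cst α β) * mono (α + β) + p ∧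
      (p = 0 ∨ ((coord p).support.sup fun γ => ∑ i, γ i) < ∑ i, (α + β) i)

/-- A quasi-commutative σ-PBW extension: `x^α r = σ^α(r) x^α` and
`x^α x^β = c_{α,β} x^{α+β}` exactly (Remark 7(iii)). -/
structure QCExt (R A : Type*) [Ring R] [Ring A] (n : ℕ) extends Ext R A n where
  mono_mul_r' : ∀ (α : Fin n → ℕ) (r : R), mono α * φ r = φ (σp α r) * mono α
  mono_mul' : ∀ α β : Fin n → ℕ, mono α * mono β = φ (cst α β) * mono (α + β)

/-- A bijective quasi-commutative σ-PBW extension: moreover all `σ^α` are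
bijective and all structure constants `c_{α,β}` are invertible. -/
structure QCBijExt (R A : Type*) [Ring R] [Ring A] (n : ℕ) extends QCExt R A n where
  σp_bij : ∀ α, Function.Bijective (σp α)
  cst_unit : ∀ α β, IsUnit (cst α β)

/-- `le` is a monomial order on `Mon(A^m)` (Definition 15): a (total) order
compatible with multiplication by monomials, with `x^β x^α e_i ⪰ x^α e_i`,
and degree compatible. -/
structure IsMonomialOrder (n m : ℕ) (le : Mon n m → Mon n m → Prop) : Prop where
  refl : ∀ X, le X X
  trans : ∀ X Y Z, le X Y → le Y Z → le X Z
  antisymm : ∀ X Y, le X Y → le Y X → X = Y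
  total : ∀ X Y, le X Y ∨ le Y X
  mul_left : ∀ (α β : Fin n → ℕ) (i : Fin m), le (α, i) (β + α, i)
  compat : ∀ (α β : Fin n → ℕ) (i j : Fin m) (γ : Fin n → ℕ),
      le (α, i) (β, j) → le (γ + α, i) (γ + β, j)
  deg_compat : ∀ (α β : Fin n → ℕ) (i j : Fin m),
      (∑ k, α k) < ∑ k, β k → le (α, i) (β, j)

/-- `le` is a monomial order on `Mon(A)` (Definition 9). -/
structure IsMonomialOrderA (n : ℕ) (le : (Fin n → ℕ) → (Fin n → ℕ) → Prop) : Prop where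
  refl : ∀ α, le α α
  trans : ∀ α β γ, le α β → le β γ → le α γ
  antisymm : ∀ α β, le α β → le β α → α = β
  total : ∀ α β, le α β ∨ le β α
  add_compat : ∀ α β γ, le α β → le (γ + α) (γ + β)
  zero_le : ∀ α, le 0 α
  deg_compat : ∀ α β, (∑ i, α i) < ∑ i, β i → le α β

variable {R A : Type*} [Ring R] [Ring A] {n m : ℕ}

/-- `α` is the exponent of the leading monomial of `a ∈ A` w.r.t. the order `leA`. -/
def IsLMA (E : Ext R A n) (leA : (Fin n → ℕ) → (Fin n → ℕ) → Prop)
    (a : A) (α : Fin n → ℕ) : Prop :=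
  E.coord a α ≠ 0 ∧ ∀ β, E.coord a β ≠ 0 → leA β α

/-- `X` is the leading monomial of the vector `f ∈ A^m` w.r.t. the order `le`. -/
def IsLM (E : Ext R A n) (le : Mon n m → Mon n m → Prop)
    (f : Fin m → A) (X : Mon n m) : Prop :=
  E.coord (f X.2) X.1 ≠ 0 ∧
    ∀ (β : Fin n → ℕ) (v : Fin m), E.coord (f v) β ≠ 0 → le (β, v) X

/-- One step reduction `f →_F h` (Definition 20). -/
def Reduces (E : Ext R A n) (le : Mon n m → Mon n m → Prop)
    (F : Set (Fin m → A)) (f h : Fin m → A) : Prop :=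
  ∃ X : Mon n m, IsLM E le f X ∧
    ∃ (t : ℕ) (g : Fin t → Fin m → A) (r : Fin t → R)
      (a : Fin t → Fin n → ℕ) (β : Fin t → Fin n → ℕ),
      (∀ i, g i ∈ F) ∧
      (∀ i, IsLM E le (g i) (β i, X.2)) ∧
      (∀ i, a i + β i = X.1) ∧
      E.coord (f X.2) X.1 =
        ∑ i, r i * (E.σp (a i) (E.coord (g i X.2) (β i)) * E.cst (a i) (β i)) ∧
      h = f - ∑ i, (E.φ (r i) * E.mono (a i)) • g i

/-- `f` is reduced (minimal) w.r.t. `F`. -/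
def Reduced (E : Ext R A n) (le : Mon n m → Mon n m → Prop)
    (F : Set (Fin m → A)) (f : Fin m → A) : Prop :=
  f = 0 ∨ ¬ ∃ h, Reduces E le F f h

/-- `f →_F,+ h`: reduction in finitely many steps. -/
def ReducesStar (E : Ext R A n) (le : Mon n m → Mon n m → Prop)
    (F : Set (Fin m → A)) : (Fin m → A) → (Fin m → A) → Prop :=
  Relation.ReflTransGen (Reduces E le F)

/-- `G` is a Gröbner basis of the submodule `M ⊆ A^m` (Definition 25):
a finite set of nonzero vectors of `M` such that every nonzero `f ∈ M`
is reducible w.r.t. `G`. -/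
def IsGB (E : Ext R A n) (le : Mon n m → Mon n m → Prop)
    (M : Submodule A (Fin m → A)) (G : Finset (Fin m → A)) : Prop :=
  (↑G : Set (Fin m → A)) ⊆ (M : Set (Fin m → A)) \ {0} ∧
    ∀ f ∈ M, f ≠ 0 → ∃ h, Reduces E le (↑G) f h

end SPBW

namespace SPBW

section Aux
variable {R A : Type*} [Ring R] [Ring A] {n m : ℕ} (E : Ext R A n)

@[simp] lemma coord_zero : E.coord (0:A) = 0 :=
  E.coord_eq 0 0 (by simp)

lemma eq_zero_of_coord (a : A) (h : E.coord a = 0) : a = 0 := by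
  have := E.repr' a; rwa [h, Finsupp.sum_zero_index] at this

@[simp] lemma coord_single (c : R) (ε : Fin n → ℕ) :
    E.coord (E.φ c * E.mono ε) = Finsupp.single ε c :=
  E.coord_eq _ _ (by rw [Finsupp.sum_single_index (by simp)])

lemma coord_sum {ι : Type*} (s : Finset ι) (f : ι → A) :
    E.coord (∑ i ∈ s, f i) = ∑ i ∈ s, E.coord (f i) := by
  classical
  induction s using Finset.induction with
  | empty => simp
  | insert _ _ h ih => rw [Finset.sum_insert h, E.coord_add, ih, Finset.sum_insert h]

lemma repr_sum (a : A) :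
    a = ∑ γ ∈ (E.coord a).support, E.φ (E.coord a γ) * E.mono γ :=
  E.repr' a

lemma coord_phi_mul (r : R) (a : A) (δ : Fin n → ℕ) :
    E.coord (E.φ r * a) δ = r * E.coord a δ := by
  classical
  have h1 : E.φ r * a = ∑ γ ∈ (E.coord a).support, E.φ (r * E.coord a γ) * E.mono γ := by
    conv_lhs => rw [repr_sum E a]
    rw [Finset.mul_sum]
    exact Finset.sum_congr rfl fun γ _ => by rw [← mul_assoc, ← map_mul]
  rw [h1, coord_sum]
  rw [Finset.sum_apply']
  simp only [coord_single, Finsupp.single_apply]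
  rw [Finset.sum_ite_eq' (E.coord a).support δ (fun γ => r * E.coord a γ)]
  by_cases h : δ ∈ (E.coord a).support
  · simp [h]
  · simp [h, Finsupp.notMem_support_iff.mp h]

/-- All monomials of `a` have total degree `< N`. -/
def DegLT (E : Ext R A n) (a : A) (N : ℕ) : Prop :=
  ∀ δ ∈ (E.coord a).support, (∑ i, δ i) < N

variable {E}



lemma degLT_zero (N : ℕ) : DegLT E (0:A) N := by
  intro δ hδ; simp at hδ

lemma degLT_mono {a : A} {N N' : ℕ} (h : DegLT E a N) (hN : N ≤ N') : DegLT E a N' :=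
  fun δ hδ => lt_of_lt_of_le (h δ hδ) hN

lemma degLT_of_disj {a : A} {N : ℕ}
    (h : a = 0 ∨ ((E.coord a).support.sup fun β => ∑ i, β i) < N) :
    DegLT E a N := by
  rcases h with rfl | h
  · exact degLT_zero (E := E) N
  · exact fun δ hδ => lt_of_le_of_lt (Finset.le_sup hδ) h

lemma degLT_add {a b : A} {N : ℕ} (ha : DegLT E a N) (hb : DegLT E b N) :
    DegLT E (a + b) N := by
  intro δ hδ
  rw [DegLT] at ha hb
  rw [E.coord_add] at hδ
  rcases Finset.mem_union.mp (Finsupp.support_add hδ) with h | h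
  · exact ha δ h
  · exact hb δ h

lemma degLT_finsetSum {ι : Type*} {s : Finset ι} {f : ι → A} {N : ℕ}
    (h : ∀ i ∈ s, DegLT E (f i) N) : DegLT E (∑ i ∈ s, f i) N := by
  classical
  induction s using Finset.induction with
  | empty => simpa using degLT_zero (E := E) N
  | @insert j s hj ih =>
    rw [Finset.sum_insert hj]
    exact degLT_add (h j (Finset.mem_insert_self _ _))
      (ih fun i hi => h i (Finset.mem_insert_of_mem hi))

lemma degLT_phi_mul {a : A} {N : ℕ} (r : R) (h : DegLT E a N) :
    DegLT E (E.φ r * a) N := by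
  intro δ hδ
  apply h δ
  rw [Finsupp.mem_support_iff] at hδ ⊢
  intro h0
  rw [coord_phi_mul, h0, mul_zero] at hδ
  exact hδ rfl

lemma degLT_phi_mono {c : R} {ε : Fin n → ℕ} {N : ℕ} (h : (∑ i, ε i) < N) :
    DegLT E (E.φ c * E.mono ε) N := by
  intro δ hδ
  rw [coord_single] at hδ
  have := Finsupp.support_single_subset hδ
  simp at this
  subst this; exact h

lemma sum_add_deg (α β : Fin n → ℕ) : (∑ i, (α + β) i) = (∑ i, α i) + ∑ i, β i := by
  simp [Finset.sum_add_distrib]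

lemma degLT_mul_mono {p : A} {N : ℕ} (h : DegLT E p N) (γ : Fin n → ℕ) :
    DegLT E (p * E.mono γ) (N + ∑ i, γ i) := by
  classical
  have hrep : p * E.mono γ
      = ∑ ε ∈ (E.coord p).support, (E.φ (E.coord p ε) * E.mono ε) * E.mono γ := by
    conv_lhs => rw [repr_sum E p]
    rw [Finset.sum_mul]
  rw [hrep]
  apply degLT_finsetSum
  intro ε hε
  obtain ⟨q, hq, hqd⟩ := E.mono_mul ε γ
  rw [mul_assoc, hq, mul_add, ← mul_assoc, ← map_mul]
  apply degLT_add
  · apply degLT_phi_mono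
    rw [sum_add_deg]
    exact Nat.add_lt_add_right (h ε hε) _
  · apply degLT_phi_mul
    apply degLT_mono (degLT_of_disj hqd)
    rw [sum_add_deg]
    exact Nat.add_le_add_right (le_of_lt (h ε hε)) _


lemma key_term (β γ : Fin n → ℕ) (c : R) :
    ∃ j : A, E.mono β * (E.φ c * E.mono γ)
        = E.φ (E.σp β c * E.cst β γ) * E.mono (β + γ) + j
      ∧ DegLT E j ((∑ i, β i) + ∑ i, γ i) := by
  obtain ⟨p₁, h₁, hd₁⟩ := E.mono_mul_r β c
  obtain ⟨q, h₂, hd₂⟩ := E.mono_mul β γ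
  refine ⟨E.φ (E.σp β c) * q + p₁ * E.mono γ, ?_, ?_⟩
  · rw [← mul_assoc, h₁, add_mul, mul_assoc, h₂, mul_add, ← mul_assoc, ← map_mul, add_assoc]
  · apply degLT_add
    · apply degLT_phi_mul
      have := degLT_of_disj hd₂
      rwa [sum_add_deg] at this
    · exact degLT_mul_mono (degLT_of_disj hd₁) γ

lemma mono_mul_decomp (β : Fin n → ℕ) (a : A) :
    ∃ p : A, E.mono β * a
        = (∑ γ ∈ (E.coord a).support,
            E.φ (E.σp β (E.coord a γ) * E.cst β γ) * E.mono (β + γ)) + p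
      ∧ ∀ δ ∈ (E.coord p).support, ∃ γ ∈ (E.coord a).support,
          (∑ i, δ i) < (∑ i, β i) + (∑ i, γ i) := by
  classical
  choose j hj hjd using fun γ => key_term (E := E) β γ (E.coord a γ)
  refine ⟨∑ γ ∈ (E.coord a).support, j γ, ?_, ?_⟩
  · conv_lhs => rw [repr_sum E a]
    rw [Finset.mul_sum, ← Finset.sum_add_distrib]
    exact Finset.sum_congr rfl fun γ _ => hj γ
  · intro δ hδ
    rw [coord_sum] at hδ
    obtain ⟨γ, hγ, hδγ⟩ := Finsupp.mem_support_finset_sum δ hδ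
    exact ⟨γ, hγ, hjd γ δ hδγ⟩

lemma coord_mono_mul_top (β γ₀ : Fin n → ℕ) (a : A)
    (hmax : ∀ γ ∈ (E.coord a).support, (∑ i, γ i) ≤ ∑ i, γ₀ i) :
    E.coord (E.mono β * a) (β + γ₀) = E.σp β (E.coord a γ₀) * E.cst β γ₀ := by
  classical
  obtain ⟨p, hp, hpd⟩ := mono_mul_decomp (E := E) β a
  rw [hp, E.coord_add, coord_sum, Finsupp.add_apply, Finset.sum_apply']
  have hp0 : E.coord p (β + γ₀) = 0 := by
    rw [← Finsupp.notMem_support_iff]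
    intro hmem
    obtain ⟨γ, hγ, hlt⟩ := hpd _ hmem
    rw [sum_add_deg] at hlt
    exact absurd (hmax γ hγ) (by omega)
  rw [hp0, add_zero]
  simp only [coord_single, Finsupp.single_apply]
  have : ∀ γ, (β + γ = β + γ₀) ↔ γ = γ₀ := fun γ => by
    constructor
    · intro h; funext i
      have := congrFun h i
      simpa using this
    · rintro rfl; rfl
  rw [Finset.sum_congr rfl (fun γ _ => by rw [if_congr (this γ) rfl rfl])]
  rw [Finset.sum_ite_eq' (E.coord a).support γ₀
    (fun γ => E.σp β (E.coord a γ) * E.cst β γ)]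
  by_cases h : γ₀ ∈ (E.coord a).support
  · simp [h]
  · simp [h, Finsupp.notMem_support_iff.mp h]

lemma coord_mono_mul_support (β : Fin n → ℕ) (a : A) (δ : Fin n → ℕ)
    (h : δ ∈ (E.coord (E.mono β * a)).support) :
    ∃ γ ∈ (E.coord a).support, δ = β + γ ∨ (∑ i, δ i) < (∑ i, β i) + (∑ i, γ i) := by
  classical
  obtain ⟨p, hp, hpd⟩ := mono_mul_decomp (E := E) β a
  rw [hp, E.coord_add] at h
  rcases Finset.mem_union.mp (Finsupp.support_add h) with h' | h'
  · rw [coord_sum] at h'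
    obtain ⟨γ, hγ, hδγ⟩ := Finsupp.mem_support_finset_sum δ h'
    rw [coord_single] at hδγ
    have := Finsupp.support_single_subset hδγ
    simp only [Finset.mem_singleton] at this
    exact ⟨γ, hγ, Or.inl this⟩
  · obtain ⟨γ, hγ, hlt⟩ := hpd δ h'
    exact ⟨γ, hγ, Or.inr hlt⟩

variable {le : Mon n m → Mon n m → Prop}

lemma deg_le_of_le (hle : IsMonomialOrder n m le) {γ γ' : Fin n → ℕ} {v v' : Fin m}
    (h : le (γ, v) (γ', v')) : (∑ i, γ i) ≤ ∑ i, γ' i := by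
  by_contra hlt
  push_neg at hlt
  have h2 := hle.deg_compat γ' γ v' v hlt
  have h3 := hle.antisymm _ _ h h2
  have : γ = γ' := congrArg Prod.fst h3
  subst this
  omega

lemma exists_max (hle : IsMonomialOrder n m le) (s : Finset (Mon n m)) (hs : s.Nonempty) :
    ∃ X ∈ s, ∀ Y ∈ s, le Y X := by
  classical
  induction s using Finset.induction with
  | empty => simp at hs
  | @insert X s hX ih =>
    rcases s.eq_empty_or_nonempty with rfl | hne
    · exact ⟨X, by simp, by simp +contextual [hle.refl]⟩
    · obtain ⟨Y, hY, hmax⟩ := ih hne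
      rcases hle.total X Y with h | h
      · refine ⟨Y, Finset.mem_insert_of_mem hY, ?_⟩
        intro Z hZ
        rcases Finset.mem_insert.mp hZ with rfl | hZ
        exacts [h, hmax Z hZ]
      · refine ⟨X, Finset.mem_insert_self _ _, ?_⟩
        intro Z hZ
        rcases Finset.mem_insert.mp hZ with rfl | hZ
        exacts [hle.refl _, hle.trans _ _ _ (hmax Z hZ) h]

lemma exists_isLM (hle : IsMonomialOrder n m le) (f : Fin m → A) (hf : f ≠ 0) :
    ∃ X, IsLM E le f X := by
  classical
  set s : Finset (Mon n m) :=
    (Finset.univ : Finset (Fin m)).biUnion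
      (fun v => (E.coord (f v)).support.image fun δ => ((δ, v) : Mon n m)) with hs
  have hmem : ∀ X : Mon n m, X ∈ s ↔ E.coord (f X.2) X.1 ≠ 0 := by
    intro ⟨δ, v⟩
    simp only [hs, Finset.mem_biUnion, Finset.mem_univ, true_and, Finset.mem_image,
      Finsupp.mem_support_iff]
    constructor
    · rintro ⟨w, δ', hδ', heq⟩
      obtain ⟨rfl, rfl⟩ := Prod.mk.injEq .. ▸ (by exact heq : (δ', w) = (δ, v))
      exact hδ'
    · intro h; exact ⟨v, δ, h, rfl⟩
  have hne : s.Nonempty := by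
    have : ∃ v, f v ≠ 0 := by
      by_contra h
      push_neg at h
      exact hf (funext h)
    obtain ⟨v, hv⟩ := this
    have : E.coord (f v) ≠ 0 := fun h => hv (eq_zero_of_coord E _ h)
    obtain ⟨δ, hδ⟩ := Finsupp.ne_iff.mp this
    exact ⟨(δ, v), (hmem (δ, v)).mpr (by simpa using hδ)⟩
  obtain ⟨X, hXs, hmax⟩ := exists_max hle s hne
  refine ⟨X, (hmem X).mp hXs, fun β v h => hmax (β, v) ((hmem (β, v)).mpr h)⟩

lemma isLM_unique {f : Fin m → A} {X Y : Mon n m}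
    (hle : IsMonomialOrder n m le) (hX : IsLM E le f X) (hY : IsLM E le f Y) : X = Y :=
  hle.antisymm _ _ (hY.2 X.1 X.2 hX.1) (hX.2 Y.1 Y.2 hY.1)

/-- Key lemma: multiplying a vector with leading monomial `(γ₀, u)` by `x^β`. -/
lemma coord_mono_smul_top (hle : IsMonomialOrder n m le) {g : Fin m → A}
    {γ₀ : Fin n → ℕ} {u : Fin m} (hg : IsLM E le g (γ₀, u)) (β : Fin n → ℕ) :
    E.coord (E.mono β * g u) (β + γ₀) = E.σp β (E.coord (g u) γ₀) * E.cst β γ₀ := by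
  apply coord_mono_mul_top
  intro γ hγ
  exact deg_le_of_le hle (hg.2 γ u (Finsupp.mem_support_iff.mp hγ))

lemma isLM_mono_smul (hle : IsMonomialOrder n m le) {g : Fin m → A}
    {γ₀ : Fin n → ℕ} {u : Fin m} (hg : IsLM E le g (γ₀, u)) (β : Fin n → ℕ)
    (hnz : E.σp β (E.coord (g u) γ₀) * E.cst β γ₀ ≠ 0) :
    IsLM E le (fun v => E.mono β * g v) (β + γ₀, u) := by
  constructor
  · rw [coord_mono_smul_top (E := E) hle hg β]
    exact hnz
  · intro δ v h
    have hδ : δ ∈ (E.coord (E.mono β * g v)).support := Finsupp.mem_support_iff.mpr h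
    obtain ⟨γ, hγ, hcase⟩ := coord_mono_mul_support (E := E) β (g v) δ hδ
    have hγle : le (γ, v) (γ₀, u) := hg.2 γ v (Finsupp.mem_support_iff.mp hγ)
    rcases hcase with rfl | hlt
    · exact hle.compat γ γ₀ v u β hγle
    · apply hle.deg_compat
      rw [sum_add_deg]
      have := deg_le_of_le hle hγle
      omega

end Aux
end SPBW

open SPBW in
/-- **(Theorem 26, (i) ⟺ (iv).)** `G` is a Gröbner basis of `M ≠ 0` if and only if
for every `α ∈ ℕ^n` and every index `u`, the left ideal
`⟨α,M⟩_u := ⟨ lc(f) : f ∈ M, ind(lm(f)) = u, exp(lm(f)) = α ⟩` of `R` equals the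
left ideal
`J_u := ⟨ σ^β(lc(g)) c_{β,g} : g ∈ G, ind(lm(g)) = u, β + exp(lm(g)) = α ⟩`. -/
theorem grobner_iff_leading_coeff_ideals
    (R A : Type*) [Ring R] [Ring A] [IsNoetherianRing R] (n m : ℕ)
    (E : SPBW.Ext R A n)
    (le : Mon n m → Mon n m → Prop) (hle : IsMonomialOrder n m le)
    (M : Submodule A (Fin m → A)) (hM : M ≠ ⊥)
    (G : Finset (Fin m → A))
    (hGM : (↑G : Set (Fin m → A)) ⊆ (M : Set (Fin m → A)) \ {0}) :
    IsGB E le M G ↔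
      ∀ (α : Fin n → ℕ) (u : Fin m),
        Submodule.span R
            {r : R | ∃ f ∈ M, IsLM E le f (α, u) ∧ r = E.coord (f u) α} =
        Submodule.span R
            {r : R | ∃ g ∈ G, ∃ (β γ : Fin n → ℕ),
              IsLM E le g (γ, u) ∧ β + γ = α ∧
              r = E.σp β (E.coord (g u) γ) * E.cst β γ} := by
  classical
  constructor
  · -- (i) ⟹ (iv)
    rintro ⟨-, hred⟩ α u
    apply le_antisymm
    · -- ⟨α,M⟩ ⊆ J
      rw [Submodule.span_le]
      rintro r ⟨f, hfM, hflm, rfl⟩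
      have hf0 : f ≠ 0 := by
        intro h
        apply hflm.1
        rw [h]
        simp
      obtain ⟨h, X, hXlm, t, g, rr, a, b, hgG, hglm, hab, hcoord, -⟩ := hred f hfM hf0
      have hX : X = (α, u) := isLM_unique hle hXlm hflm
      subst hX
      rw [hcoord]
      apply Submodule.sum_mem
      intro i _
      rw [← smul_eq_mul]
      exact Submodule.smul_mem _ _ (Submodule.subset_span
        ⟨g i, Finset.mem_coe.mp (hgG i), a i, b i, hglm i, hab i, rfl⟩)
    · -- J ⊆ ⟨α,M⟩
      rw [Submodule.span_le]
      rintro r ⟨g, hgG, β, γ, hglm, hβγ, rfl⟩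
      by_cases hz : E.σp β (E.coord (g u) γ) * E.cst β γ = 0
      · rw [hz]
        exact Submodule.zero_mem _
      · apply Submodule.subset_span
        have hgM : g ∈ M := (hGM (Finset.mem_coe.mpr hgG)).1
        refine ⟨fun v => E.mono β * g v, ?_, ?_, ?_⟩
        · have : (fun v => E.mono β * g v) = E.mono β • g := by
            funext v
            rw [Pi.smul_apply, smul_eq_mul]
          rw [this]
          exact M.smul_mem _ hgM
        · rw [← hβγ]
          exact isLM_mono_smul hle hglm β hz
        · rw [← hβγ]
          exact (coord_mono_smul_top hle hglm β).symm
  · -- (iv) ⟹ (i)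
    intro hid
    refine ⟨hGM, fun f hfM hf0 => ?_⟩
    obtain ⟨X, hXlm⟩ := exists_isLM (E := E) hle f hf0
    obtain ⟨α, u⟩ := X
    have hmem : E.coord (f u) α ∈ Submodule.span R
        {r : R | ∃ f ∈ M, IsLM E le f (α, u) ∧ r = E.coord (f u) α} :=
      Submodule.subset_span ⟨f, hfM, hXlm, rfl⟩
    rw [hid α u] at hmem
    obtain ⟨c, hsupp, hsum⟩ := Submodule.mem_span_set.mp hmem
    set t := c.support.card with ht
    set e : Fin t ≃ c.support := c.support.equivFin.symm with he
    have hw : ∀ i : Fin t, ∃ g ∈ G, ∃ β γ : Fin n → ℕ, IsLM E le g (γ, u) ∧ β + γ = α ∧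
        ((e i : R) = E.σp β (E.coord (g u) γ) * E.cst β γ) := fun i => hsupp (e i).2
    choose g hgG β γ hglm hβγ hval using hw
    refine ⟨_, (α, u), hXlm, t, g, fun i => c (e i), β, γ,
      fun i => Finset.mem_coe.mpr (hgG i), hglm, hβγ, ?_, rfl⟩
    have step1 : ∀ i : Fin t,
        c (e i) * (E.σp (β i) (E.coord (g i u) (γ i)) * E.cst (β i) (γ i))
          = c (e i) • (e i : R) := by
      intro i
      rw [← hval i, smul_eq_mul]
    calc E.coord (f u) α = c.sum fun s r => r • s := hsum.symm
      _ = ∑ x ∈ c.support, c x • (x : R) := rfl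
      _ = ∑ x : c.support, c x • (x : R) := (Finset.sum_coe_sort _ _).symm
      _ = ∑ i : Fin t, c (e i) • ((e i : R)) :=
          (Equiv.sum_comp e (fun x : c.support => c x • (x : R))).symm
      _ = ∑ i : Fin t, c (e i) *
            (E.σp (β i) (E.coord (g i u) (γ i)) * E.cst (β i) (γ i)) := by
          exact Finset.sum_congr rfl fun i _ => (step1 i).symm
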